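/- For an infinite ordinal α with uncountable cofinality (cf(α) > ω₀), every open cover of the space α of cardinality strictly less than cf(α) admits a finite subcover. -/

import Mathlib

open Set Filter Topology

/-- For an infinite ordinal `α` of uncountable cofinality, every open cover of `α` of
cardinality strictly less than `cf(α)` has a finite subcover. -/
theorem ordinal_small_cover_finite_subcover (α : Ordinal.{0}) (hα : Ordinal.omega0 ≤ α)
    (hcf : Cardinal.aleph0 < α.cof)
    (𝒰 : Set (Set ↥(Set.Iio α))) (hopen : ∀ U ∈ 𝒰, IsOpen U) (hcov : ⋃₀ 𝒰 = Set.univ)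
    (hcard : Cardinal.mk 𝒰 < Cardinal.lift.{1} α.cof) :
    ∃ 𝒱 ⊆ 𝒰, 𝒱.Finite ∧ ⋃₀ 𝒱 = Set.univ := by
  classical
  have hα0 : (0 : Ordinal) < α := lt_of_lt_of_le Ordinal.omega0_pos hα
  have x0 : ↥(Set.Iio α) := ⟨0, hα0⟩
  haveI : Nonempty ↥(Set.Iio α) := ⟨x0⟩
  -- the order type of `<` on `Iio α` is `lift α`
  haveI : IsWellOrder α.ToType (· < ·) := isWellOrder_lt
  haveI : IsWellOrder ↥(Set.Iio α) (· < ·) := isWellOrder_lt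
  have htype : Ordinal.type ((· < ·) : ↥(Set.Iio α) → ↥(Set.Iio α) → Prop)
      = Ordinal.lift.{1} α := by
    have e : ((· < ·) : ↥(Set.Iio α) → ↥(Set.Iio α) → Prop) ≃r
        ((· < ·) : α.ToType → α.ToType → Prop) := Ordinal.ToType.mk.toRelIsoLT
    have h2 : Ordinal.lift.{0} (Ordinal.type ((· < ·) : ↥(Set.Iio α) → ↥(Set.Iio α) → Prop))
        = Ordinal.lift.{1} (Ordinal.type ((· < ·) : α.ToType → α.ToType → Prop)) :=
      e.ordinal_lift_type_eq
    rw [Ordinal.type_toType] at h2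
    rw [← Ordinal.lift_uzero
      (Ordinal.type ((· < ·) : ↥(Set.Iio α) → ↥(Set.Iio α) → Prop))]
    exact h2
  have key : ∀ S : Set ↥(Set.Iio α), Cardinal.mk S < Cardinal.lift.{1} α.cof →
      ∃ a : ↥(Set.Iio α), ∀ b ∈ S, b < a := by
    intro S hS
    have h3 : Cardinal.mk S
        < (Ordinal.type ((· < ·) : ↥(Set.Iio α) → ↥(Set.Iio α) → Prop)).cof := by
      rw [htype, ← Ordinal.lift_cof]
      exact hS
    rw [Ordinal.cof_type] at h3
    by_contra hne
    push_neg at hne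
    exact absurd (Order.cof_le (s := S) hne) (not_le.mpr h3)
  obtain ⟨U₀, hU₀⟩ : 𝒰.Nonempty := by
    by_contra hne
    rw [Set.not_nonempty_iff_eq_empty] at hne
    rw [hne, Set.sUnion_empty] at hcov
    exact (Set.univ_nonempty (α := ↥(Set.Iio α))).ne_empty hcov.symm
  -- some member of the cover contains a tail
  have tail : ∃ U ∈ 𝒰, ∃ γ : ↥(Set.Iio α), ∀ x : ↥(Set.Iio α), γ < x → x ∈ U := by
    by_contra h
    push_neg at h
    have hc : ∀ (U : ↥𝒰) (x : ↥(Set.Iio α)),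
        ∃ y : ↥(Set.Iio α), x < y ∧ y ∉ (U : Set ↥(Set.Iio α)) := by
      intro U x
      obtain ⟨y, h1, h2⟩ := h U U.2 x
      exact ⟨y, h1, h2⟩
    choose c hc1 hc2 using hc
    have hF : ∀ x : ↥(Set.Iio α), ∃ a : ↥(Set.Iio α), ∀ U : ↥𝒰, c U x < a := by
      intro x
      obtain ⟨a, ha⟩ := key (Set.range fun U : ↥𝒰 => c U x)
        (lt_of_le_of_lt Cardinal.mk_range_le hcard)
      exact ⟨a, fun U => ha _ (Set.mem_range_self U)⟩
    choose F hF using hF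
    have hxF : ∀ x : ↥(Set.Iio α), x < F x := fun x =>
      lt_trans (hc1 ⟨U₀, hU₀⟩ x) (hF x ⟨U₀, hU₀⟩)
    set p : ℕ → ↥(Set.Iio α) := fun n => F^[n] x0 with hp
    have hpsucc : ∀ n, p (n + 1) = F (p n) := fun n => Function.iterate_succ_apply' F n x0
    set a : ℕ → Ordinal := fun n => (p n).1 with ha
    have hmono : Monotone a := monotone_nat_of_le_succ fun n => by
      rw [ha]; simp only [hpsucc n]
      exact (Subtype.coe_lt_coe.mpr (hxF (p n))).le
    have hbd : ∀ n, a n < α := fun n => (p n).2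
    have hsup : (⨆ n, a n) < α := by
      refine Ordinal.iSup_lt_ord ?_ hbd
      rw [Cardinal.mk_nat]; exact hcf
    set L : ↥(Set.Iio α) := ⟨⨆ n, a n, hsup⟩ with hL
    have hLcov : L ∈ ⋃₀ 𝒰 := by rw [hcov]; trivial
    obtain ⟨U, hU, hLU⟩ := hLcov
    have hbdd : BddAbove (Set.range a) := ⟨α, by rintro _ ⟨n, rfl⟩; exact (hbd n).le⟩
    have htend : Tendsto a atTop (𝓝 (⨆ n, a n)) := tendsto_atTop_ciSup hmono hbdd
    set q : ℕ → Ordinal := fun n => (c ⟨U, hU⟩ (p n)).1 with hq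
    have h1 : ∀ n, a n ≤ q n := fun n => (Subtype.coe_lt_coe.mpr (hc1 ⟨U, hU⟩ (p n))).le
    have h2 : ∀ n, q n ≤ a (n + 1) := fun n => by
      rw [ha]; simp only [hpsucc n]
      exact (Subtype.coe_lt_coe.mpr (hF (p n) ⟨U, hU⟩)).le
    have htend2 : Tendsto (fun n => a (n + 1)) atTop (𝓝 (⨆ n, a n)) :=
      htend.comp (tendsto_add_atTop_nat 1)
    have hqt : Tendsto q atTop (𝓝 (⨆ n, a n)) :=
      tendsto_of_tendsto_of_tendsto_of_le_of_le htend htend2 h1 h2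
    have hqX : Tendsto (fun n => c ⟨U, hU⟩ (p n)) atTop (𝓝 L) :=
      (Topology.IsEmbedding.subtypeVal.isInducing.tendsto_nhds_iff).mpr hqt
    have hmem : L ∈ closure ((U : Set ↥(Set.Iio α))ᶜ) :=
      mem_closure_of_tendsto hqX
        (Filter.Eventually.of_forall fun n => hc2 ⟨U, hU⟩ (p n))
    rw [((hopen U hU).isClosed_compl).closure_eq] at hmem
    exact hmem hLU
  obtain ⟨U, hU, γ, hγ⟩ := tail
  have hK : IsCompact (Set.Iic γ) := by
    rw [Subtype.isCompact_iff]
    have himg : Subtype.val '' (Set.Iic γ) = Set.Iic (γ : Ordinal) := by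
      ext b
      constructor
      · rintro ⟨x, hx, rfl⟩; simpa using hx
      · intro hb
        exact ⟨⟨b, Set.mem_Iio.mpr (lt_of_le_of_lt (Set.mem_Iic.mp hb) γ.2)⟩, Set.mem_Iic.mp hb, rfl⟩
    have hIcc : Set.Iic (γ : Ordinal) = Set.Icc 0 (γ : Ordinal) := by
      ext b; simp [zero_le]
    rw [himg, hIcc]
    exact isCompact_Icc
  have hcov' : Set.Iic γ ⊆ ⋃ i : ↥𝒰, (i : Set ↥(Set.Iio α)) := by
    rw [← Set.sUnion_eq_iUnion, hcov]; exact Set.subset_univ _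
  obtain ⟨t, ht⟩ := hK.elim_finite_subcover (fun i : ↥𝒰 => (i : Set ↥(Set.Iio α)))
    (fun i => hopen i i.2) hcov'
  refine ⟨insert U (Subtype.val '' (t : Set ↥𝒰)), ?_, ?_, ?_⟩
  · intro V hV
    rcases Set.mem_insert_iff.mp hV with rfl | ⟨i, _, rfl⟩
    · exact hU
    · exact i.2
  · exact (t.finite_toSet.image _).insert U
  · ext x
    simp only [Set.mem_univ, iff_true]
    rcases le_or_gt x γ with hx | hx
    · obtain ⟨i, hit, hxi⟩ := Set.mem_iUnion₂.mp (ht hx)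
      exact ⟨i, Set.mem_insert_iff.mpr (Or.inr ⟨i, hit, rfl⟩), hxi⟩
    · exact ⟨U, Set.mem_insert _ _, hγ x hx⟩
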